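/- Let 𝕋 := ℝ/ℤ. For k ∈ ℤ and θ ∈ 𝕋, write e(kθ) for the well-defined complex number exp(2πik·θ̂), where θ̂ ∈ ℝ is any lift of θ. Let α ∈ ℝ, δ > 0 and τ ≥ 2 satisfy |α − p/q| > δ/|q|^τ for all integers p and nonzero integers q. Let c : ℤ → ℂ satisfy c(0) = 0 and |c(k)| ≤ C·r^{|k|} for all k, for some constants C ≥ 0 and 0 < r < 1. Then: (1) the series ∑_{k≠0} |c(k)| / |1 − exp(2πikα)| converges; (2) the function u : 𝕋 → ℂ defined by the (absolutely and uniformly convergent) series u(θ) := ∑_{k≠0} (c(k)/(1 − exp(2πikα))) · e(kθ) is continuous; and (3) u solves the cohomological equation u(θ + α) − u(θ) = −g(θ) for all θ ∈ 𝕋, where g(θ) := ∑_{k∈ℤ} c(k)·e(kθ) (this series also converging absolutely and uniformly). -/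

import Mathlib

open MeasureTheory

lemma aux_abs_one_sub_exp (x : ℝ) :
    ‖1 - Complex.exp (x * Complex.I)‖ = 2 * |Real.sin (x / 2)| := by
  rw [Complex.exp_mul_I]
  have h : (1 : ℂ) - (Complex.cos x + Complex.sin x * Complex.I)
      = ((1 - Real.cos x : ℝ) : ℂ) + ((-Real.sin x : ℝ) : ℂ) * Complex.I := by
    push_cast; ring
  rw [h, Complex.norm_add_mul_I, Real.abs_sin_half]
  rw [show (2:ℝ) * Real.sqrt ((1 - Real.cos x) / 2)
      = Real.sqrt (4 * ((1 - Real.cos x) / 2)) by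
    rw [Real.sqrt_mul (by norm_num),
      show Real.sqrt 4 = 2 by
        rw [show (4:ℝ) = 2 ^ 2 by norm_num, Real.sqrt_sq (by norm_num)]]]
  congr 1
  nlinarith [Real.sin_sq_add_cos_sq x]

lemma aux_sin_lb (x : ℝ) : 2 * |x - round x| ≤ |Real.sin (Real.pi * x)| := by
  have hπ := Real.pi_pos
  set n := round x with hn
  have hy : |x - (n : ℝ)| ≤ 1 / 2 := abs_sub_round x
  have h2 : |Real.sin (Real.pi * (x - n))| = |Real.sin (Real.pi * x)| := by
    rw [show Real.pi * (x - n) = Real.pi * x - (n : ℝ) * Real.pi by ring,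
      Real.sin_sub_int_mul_pi, abs_mul,
      show |(-1:ℝ) ^ n| = 1 by
        rcases Int.even_or_odd n with h | h
        · rw [h.neg_one_zpow, abs_one]
        · rw [h.neg_one_zpow]; norm_num,
      one_mul]
  rw [← h2]
  set y := x - (n : ℝ) with hyd
  have hodd : |Real.sin (Real.pi * y)| = |Real.sin (Real.pi * |y|)| := by
    rcases abs_choice y with h | h
    · rw [h]
    · rw [h, show Real.pi * -y = -(Real.pi * y) by ring, Real.sin_neg, abs_neg]
  have hy2 : Real.pi * |y| ≤ Real.pi / 2 := by nlinarith [abs_nonneg y]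
  have hnn : 0 ≤ Real.sin (Real.pi * |y|) :=
    Real.sin_nonneg_of_nonneg_of_le_pi (by positivity) (by linarith)
  have hj : 2 / Real.pi * (Real.pi * |y|) ≤ Real.sin (Real.pi * |y|) :=
    Real.mul_le_sin (by positivity) hy2
  have heq : 2 / Real.pi * (Real.pi * |y|) = 2 * |y| := by field_simp
  rw [hodd, abs_of_nonneg hnn]
  linarith

/-- Fourier-series solution of the cohomological equation `u(θ+α) − u(θ) = −g(θ)` for a
Diophantine frequency `α` and exponentially decaying Fourier coefficients `c` with
`c 0 = 0`. Here `fourier k θ = exp (2πik θ̂)` for any real lift `θ̂` of `θ`: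
(1) the series of moduli `∑_{k} |c k| / |1 − e^{2πikα}|` converges (the `k = 0` term
being `0/0 = 0`); (2) the sum `u` is continuous on the circle; (3) the Fourier series of
`g` converges absolutely, and `u(θ + α) − u(θ) = −g(θ)` for all `θ`. -/
theorem cohomological_equation_solution
    (α δ τ : ℝ) (hδ : 0 < δ) (hτ : 2 ≤ τ)
    (hdio : ∀ p q : ℤ, q ≠ 0 → δ / |(q : ℝ)| ^ τ < |α - p / q|)
    (c : ℤ → ℂ) (hc0 : c 0 = 0)
    (C r : ℝ) (hC : 0 ≤ C) (hr0 : 0 < r) (hr1 : r < 1)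
    (hb : ∀ k : ℤ, ‖c k‖ ≤ C * r ^ k.natAbs) :
    Summable (fun k : ℤ =>
        ‖c k‖ /
          ‖1 - Complex.exp (2 * Real.pi * Complex.I * (k : ℂ) * (α : ℂ))‖)
    ∧ Continuous (fun θ : UnitAddCircle =>
        ∑' k : ℤ,
          c k / (1 - Complex.exp (2 * Real.pi * Complex.I * (k : ℂ) * (α : ℂ))) * fourier k θ)
    ∧ (∀ θ : UnitAddCircle, Summable fun k : ℤ => ‖c k * fourier k θ‖)
    ∧ ∀ θ : UnitAddCircle,
        (∑' k : ℤ,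
            c k / (1 - Complex.exp (2 * Real.pi * Complex.I * (k : ℂ) * (α : ℂ))) *
              fourier k (θ + (α : UnitAddCircle)))
          - (∑' k : ℤ,
              c k / (1 - Complex.exp (2 * Real.pi * Complex.I * (k : ℂ) * (α : ℂ))) *
                fourier k θ)
        = -∑' k : ℤ, c k * fourier k θ := by
  have hπ := Real.pi_pos
  set E : ℤ → ℂ := fun k => Complex.exp (2 * Real.pi * Complex.I * (k : ℂ) * (α : ℂ)) with hE
  -- basic cast facts
  have hcast : ∀ k : ℤ, k ≠ 0 → (1:ℝ) ≤ |(k : ℝ)| := by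
    intro k hk
    have : (1:ℤ) ≤ |k| := Int.one_le_abs hk
    calc (1:ℝ) ≤ ((|k| : ℤ) : ℝ) := by exact_mod_cast this
      _ = |(k:ℝ)| := by push_cast; ring
  -- lower bound on the denominator
  have hden : ∀ k : ℤ, k ≠ 0 →
      4 * δ / |(k : ℝ)| ^ τ ≤ ‖1 - E k‖ := by
    intro k hk
    have hk0 : (0:ℝ) < |(k:ℝ)| := by linarith [hcast k hk]
    have harg : (2 * Real.pi * Complex.I * (k : ℂ) * (α : ℂ))
        = ((2 * Real.pi * ((k:ℝ) * α) : ℝ) : ℂ) * Complex.I := by push_cast; ring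
    rw [hE]
    simp only
    rw [harg, aux_abs_one_sub_exp, show (2 * Real.pi * ((k:ℝ) * α)) / 2
        = Real.pi * ((k:ℝ) * α) by ring]
    have hsin := aux_sin_lb ((k:ℝ) * α)
    set n := round ((k:ℝ) * α) with hnr
    have hd := hdio n k hk
    have hkne : ((k:ℝ)) ≠ 0 := Int.cast_ne_zero.mpr hk
    have heq : α - (n:ℝ) / (k:ℝ) = ((k:ℝ) * α - n) / (k:ℝ) := by field_simp
    rw [heq, abs_div] at hd
    have hpow : (0:ℝ) < |(k:ℝ)| ^ τ := Real.rpow_pos_of_pos hk0 τ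
    have h1 : δ / |(k:ℝ)| ^ τ * |(k:ℝ)| < |(k:ℝ) * α - (n:ℝ)| :=
      (lt_div_iff₀ hk0).mp hd
    have h2 : δ / |(k:ℝ)| ^ τ ≤ δ / |(k:ℝ)| ^ τ * |(k:ℝ)| :=
      le_mul_of_one_le_right (by positivity) (hcast k hk)
    have h3 : δ / |(k:ℝ)| ^ τ < |(k:ℝ) * α - (n:ℝ)| := lt_of_le_of_lt h2 h1
    rw [mul_div_assoc]
    linarith
  have hne : ∀ k : ℤ, k ≠ 0 → (1 : ℂ) - E k ≠ 0 := by
    intro k hk h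
    have h1 := hden k hk
    rw [h, norm_zero] at h1
    have : (0:ℝ) < 4 * δ / |(k:ℝ)| ^ τ := by
      have hk0 : (0:ℝ) < |(k:ℝ)| := by linarith [hcast k hk]
      positivity
    linarith
  -- majorant
  set m : ℕ := ⌈τ⌉₊ with hm
  have hm0 : m ≠ 0 := by
    have : (0:ℝ) < τ := by linarith
    simp [hm]
    positivity
  have hτm : τ ≤ (m : ℝ) := Nat.le_ceil τ
  set M : ℤ → ℝ := fun k => C * r ^ k.natAbs * (k.natAbs : ℝ) ^ m / (4 * δ) with hMdef
  have hgnat : Summable (fun n : ℕ => C * r ^ n * (n : ℝ) ^ m / (4 * δ)) := by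
    have h := summable_pow_mul_geometric_of_norm_lt_one (R := ℝ) m
      (r := r) (by rw [Real.norm_eq_abs, abs_of_pos hr0]; exact hr1)
    have := (h.mul_left (C / (4 * δ)))
    apply this.congr
    intro n
    ring
  have hM : Summable M := by
    apply Summable.of_nat_of_neg
    · apply hgnat.congr; intro n; simp [hMdef]
    · apply hgnat.congr; intro n; simp [hMdef]
  have hbound : ∀ k : ℤ, ‖c k‖ / ‖1 - E k‖ ≤ M k := by
    intro k
    rcases eq_or_ne k 0 with rfl | hk
    · simp [hc0, hMdef, zero_pow hm0]
    · have hk0 : (0:ℝ) < |(k:ℝ)| := by linarith [hcast k hk]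
      have hd := hden k hk
      have h0 : (0:ℝ) < 4 * δ / |(k:ℝ)| ^ τ := by positivity
      have step1 : ‖c k‖ / ‖1 - E k‖
          ≤ (C * r ^ k.natAbs) / (4 * δ / |(k:ℝ)| ^ τ) :=
        div_le_div₀ (by positivity) (hb k) h0 hd
      have hA_le : |(k:ℝ)| ^ τ ≤ (k.natAbs : ℝ) ^ m := by
        have : |(k:ℝ)| ^ τ ≤ |(k:ℝ)| ^ (m : ℝ) :=
          Real.rpow_le_rpow_of_exponent_le (hcast k hk) hτm
        have h2 : |(k:ℝ)| ^ (m : ℝ) = |(k:ℝ)| ^ (m : ℕ) := Real.rpow_natCast _ m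
        have h3 : |(k:ℝ)| = (k.natAbs : ℝ) := by
          rw [Nat.cast_natAbs, Int.cast_abs]
        rw [h2, h3] at this
        rwa [h3]
      have step2 : (C * r ^ k.natAbs) / (4 * δ / |(k:ℝ)| ^ τ)
          = C * r ^ k.natAbs * |(k:ℝ)| ^ τ / (4 * δ) := by
        rw [div_div_eq_mul_div]
      refine step1.trans ?_
      rw [step2]
      have hMk : M k = C * r ^ k.natAbs * (k.natAbs : ℝ) ^ m / (4 * δ) := rfl
      rw [hMk]
      gcongr
  have part1 : Summable (fun k : ℤ => ‖c k‖ / ‖1 - E k‖) :=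
    Summable.of_nonneg_of_le (fun k => by positivity) hbound hM
  -- geometric majorant for |c|
  have hgeo : Summable (fun k : ℤ => C * r ^ k.natAbs) := by
    have h : Summable (fun n : ℕ => C * r ^ n) :=
      (summable_geometric_of_lt_one hr0.le hr1).mul_left C
    apply Summable.of_nat_of_neg
    · apply h.congr; intro n; simp
    · apply h.congr; intro n; simp
  -- norms of fourier terms
  have hfab : ∀ (k : ℤ) (θ : UnitAddCircle), ‖fourier k θ‖ = 1 := by
    intro k θ
    rw [fourier_apply]
    exact Circle.norm_coe _
  have hnorm : ∀ (k : ℤ) (θ : UnitAddCircle),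
      ‖c k / (1 - E k) * fourier k θ‖ = ‖c k‖ / ‖1 - E k‖ := by
    intro k θ
    rw [norm_mul, norm_div, hfab k θ, mul_one]
  -- part 2 : continuity
  have part2 : Continuous (fun θ : UnitAddCircle =>
      ∑' k : ℤ, c k / (1 - E k) * fourier k θ) := by
    apply continuous_tsum (fun k => continuous_const.mul (fourier k).continuous) part1
    intro k θ
    exact (hnorm k θ).le
  -- part 3 : absolute convergence of g
  have part3 : ∀ θ : UnitAddCircle, Summable fun k : ℤ => ‖c k * fourier k θ‖ := by
    intro θ
    apply Summable.of_nonneg_of_le (fun k => by positivity) _ hgeo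
    intro k
    rw [norm_mul, hfab k θ, mul_one]
    exact hb k
  -- summability of u-series at each point
  have hs : ∀ θ : UnitAddCircle, Summable (fun k : ℤ => c k / (1 - E k) * fourier k θ) := by
    intro θ
    apply Summable.of_norm
    apply part1.congr
    intro k
    exact (hnorm k θ).symm
  refine ⟨part1, part2, part3, ?_⟩
  intro θ
  -- key identity
  have hfmul : ∀ k : ℤ, (fourier k (θ + (α : UnitAddCircle)) : ℂ)
      = fourier k θ * E k := by
    intro k
    rw [fourier_apply, smul_add, AddCircle.toCircle_add]
    push_cast
    rw [← fourier_apply]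
    congr 1
    rw [fourier_coe_apply' (T := 1)]
    rw [hE]
    norm_num
  have key : ∀ k : ℤ,
      c k / (1 - E k) * fourier k (θ + (α : UnitAddCircle))
        - c k / (1 - E k) * fourier k θ = -(c k * fourier k θ) := by
    intro k
    rcases eq_or_ne k 0 with rfl | hk
    · simp [hc0]
    · rw [hfmul k]
      have h1 := hne k hk
      field_simp
      ring
  show (∑' k : ℤ, c k / (1 - E k) * fourier k (θ + (α : UnitAddCircle)))
      - (∑' k : ℤ, c k / (1 - E k) * fourier k θ) = -∑' k : ℤ, c k * fourier k θ
  rw [← Summable.tsum_sub (hs _) (hs _), tsum_congr key, tsum_neg]
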